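/- Let V be a bounded radially symmetric real potential on V(T), i.e. V(x) = v_{|x|} for a bounded real sequence (v_n)_{n≥0}. Let W : ℓ²(ℕ₀) → ℓ²(T) be the isometry with W e_n = 2^{−n/2} Σ_{x:|x|=n} e_x, and let J be the Jacobi operator on ℓ²(ℕ₀) with diagonal entries v_n/√2 and off-diagonal entries 1 (i.e. (Jf)(n) = f(n−1) + (v_n/√2) f(n) + f(n+1), with the convention f(−1) = 0). Then J = (1/√2) W* H_V W, and moreover H_V maps the range of W into itself, so that √2·J is unitarily equivalent to the restriction of H_V to the closed subspace ran W of ℓ²(T). -/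

import Mathlib

open MeasureTheory Filter ContinuousLinearMap

noncomputable section

abbrev l2T : Type := lp (fun _ : List Bool => ℂ) 2
abbrev l2N : Type := lp (fun _ : ℕ => ℂ) 2

def eT (x : List Bool) : l2T := lp.single 2 x 1
def eN (n : ℕ) : l2N := lp.single 2 n 1

def parentVal (f : List Bool → ℂ) (x : List Bool) : ℂ :=
  match x with
  | [] => 0
  | _ :: t => f t

def IsSchrodingerOp (V : List Bool → ℝ) (H : l2T →L[ℂ] l2T) : Prop :=
  ∀ f : l2T, ∀ x : List Bool,
    (H f : ∀ _ : List Bool, ℂ) x =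
      parentVal (fun y => f y) x + f (false :: x) + f (true :: x) + (V x : ℂ) * f x

/-- The sphere `{x : |x| = n}` of the binary tree, as a `Finset`. -/
def sphereF (n : ℕ) : Finset (List Bool) :=
  Finset.image (fun f : Fin n → Bool => List.ofFn f) Finset.univ

lemma eN_apply (n m : ℕ) : (eN n : ∀ _ : ℕ, ℂ) m = if m = n then 1 else 0 := by
  rw [eN, lp.single_apply, Pi.single_apply]

lemma eT_apply (x y : List Bool) : (eT x : ∀ _ : List Bool, ℂ) y = if y = x then 1 else 0 := by
  rw [eT, lp.single_apply, Pi.single_apply]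

lemma mem_sphereF {x : List Bool} {n : ℕ} : x ∈ sphereF n ↔ x.length = n := by
  simp only [sphereF, Finset.mem_image, Finset.mem_univ, true_and]
  constructor
  · rintro ⟨f, rfl⟩; simp
  · rintro rfl; exact ⟨fun i => x.get i, List.ofFn_get x⟩

lemma card_sphereF (n : ℕ) : (sphereF n).card = 2 ^ n := by
  rw [sphereF, Finset.card_image_of_injective _ List.ofFn_injective]
  simp

lemma single_eq_smul_eN (c : ℂ) (n : ℕ) : lp.single 2 n c = c • eN n := by
  rw [eN, ← lp.single_smul]; norm_num

lemma ext_eN {X : Type*} [NormedAddCommGroup X] [NormedSpace ℂ X] (T S : l2N →L[ℂ] X)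
    (h : ∀ n, T (eN n) = S (eN n)) : T = S := by
  ext f
  have hs : HasSum (fun n : ℕ => lp.single 2 n (f n)) f :=
    lp.hasSum_single (by norm_num) f
  have hT := hs.mapL T
  have hS := hs.mapL S
  refine hT.unique ?_
  have : (fun n : ℕ => T (lp.single 2 n (f n))) = fun n => S (lp.single 2 n (f n)) := by
    funext n
    rw [single_eq_smul_eN, T.map_smul, S.map_smul, h]
  rw [this]
  exact hS

lemma sum_eT_apply (n : ℕ) (y : List Bool) :
    ((∑ x ∈ sphereF n, eT x : l2T) : ∀ _ : List Bool, ℂ) y = if y.length = n then 1 else 0 := by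
  rw [lp.coeFn_sum, Finset.sum_apply]
  rw [show (∑ x ∈ sphereF n, (eT x : ∀ _ : List Bool, ℂ) y)
      = ∑ x ∈ sphereF n, if y = x then 1 else 0 by
    exact Finset.sum_congr rfl fun x _ => eT_apply x y]
  rw [Finset.sum_ite_eq]
  simp [mem_sphereF]

lemma Wcoord (W : l2N →L[ℂ] l2T)
    (hW : ∀ n : ℕ, W (eN n) = ((Real.sqrt 2 : ℂ))⁻¹ ^ n • ∑ x ∈ sphereF n, eT x)
    (n : ℕ) (y : List Bool) :
    (W (eN n) : ∀ _ : List Bool, ℂ) y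
      = ((Real.sqrt 2 : ℂ))⁻¹ ^ n * (if y.length = n then 1 else 0) := by
  rw [hW, lp.coeFn_smul, Pi.smul_apply, sum_eT_apply, smul_eq_mul]

lemma JeN (v : ℕ → ℝ) (J : l2N →L[ℂ] l2N)
    (hJ : ∀ f : l2N, ∀ n : ℕ,
      (J f : ∀ _ : ℕ, ℂ) n =
        (if n = 0 then 0 else f (n - 1)) + ((v n / Real.sqrt 2 : ℝ) : ℂ) * f n + f (n + 1))
    (n : ℕ) :
    J (eN n) = (if n = 0 then 0 else eN (n - 1))
      + ((v n / Real.sqrt 2 : ℝ) : ℂ) • eN n + eN (n + 1) := by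
  apply lp.ext; funext m
  rw [hJ]
  have hco : (((if n = 0 then 0 else eN (n - 1))
      + ((v n / Real.sqrt 2 : ℝ) : ℂ) • eN n + eN (n + 1) : l2N) : ∀ _ : ℕ, ℂ) m
      = (if n = 0 then (0:ℂ) else (eN (n-1) : ∀ _ : ℕ, ℂ) m)
        + ((v n / Real.sqrt 2 : ℝ) : ℂ) * (eN n : ∀ _ : ℕ, ℂ) m
        + (eN (n+1) : ∀ _ : ℕ, ℂ) m := by
    rw [lp.coeFn_add, lp.coeFn_add, Pi.add_apply, Pi.add_apply, lp.coeFn_smul, Pi.smul_apply,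
      smul_eq_mul]
    congr 2
    split <;> simp
  rw [hco]
  simp only [eN_apply]
  rcases eq_or_ne m n with rfl | hmn
  · simp only [if_pos rfl]
    split_ifs <;> (try (exfalso; omega)) <;> norm_num
  · split_ifs <;> (try (exfalso; omega)) <;> norm_num

set_option maxHeartbeats 2000000 in

lemma key (v : ℕ → ℝ) (HV : l2T →L[ℂ] l2T)
    (hHV : IsSchrodingerOp (fun x => v x.length) HV)
    (W : l2N →L[ℂ] l2T)
    (hW : ∀ n : ℕ, W (eN n) = ((Real.sqrt 2 : ℂ))⁻¹ ^ n • ∑ x ∈ sphereF n, eT x)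
    (J : l2N →L[ℂ] l2N)
    (hJ : ∀ f : l2N, ∀ n : ℕ,
      (J f : ∀ _ : ℕ, ℂ) n =
        (if n = 0 then 0 else f (n - 1)) + ((v n / Real.sqrt 2 : ℝ) : ℂ) * f n + f (n + 1))
    (n : ℕ) :
    HV (W (eN n)) = (Real.sqrt 2 : ℂ) • W (J (eN n)) := by
  have hs0 : (Real.sqrt 2 : ℂ) ≠ 0 := by
    simpa using Real.sqrt_ne_zero'.mpr (by norm_num : (0:ℝ) < 2)
  have hs2 : (Real.sqrt 2 : ℂ) * (Real.sqrt 2 : ℂ) = 2 := by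
    rw [← Complex.ofReal_mul, Real.mul_self_sqrt (by norm_num : (0:ℝ) ≤ 2)]
    norm_num
  rw [JeN v J hJ n]
  rw [map_add, map_add, W.map_smul, apply_ite W, map_zero]
  apply lp.ext; funext x
  rw [hHV]
  have hsm : ∀ g : l2T, ((((Real.sqrt 2 : ℂ)) • g : l2T) : ∀ _ : List Bool, ℂ) x
      = (Real.sqrt 2 : ℂ) * g x := by
    intro g; rw [lp.coeFn_smul, Pi.smul_apply, smul_eq_mul]
  rw [hsm, lp.coeFn_add, lp.coeFn_add, Pi.add_apply, Pi.add_apply, lp.coeFn_smul, Pi.smul_apply,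
    smul_eq_mul]
  rw [apply_ite (fun g : l2T => (g : ∀ _ : List Bool, ℂ) x)]
  simp only [lp.coeFn_zero, Pi.zero_apply]
  simp only [Wcoord W hW]
  cases x with
  | nil =>
    simp only [parentVal, List.length_nil, List.length_cons]
    rcases eq_or_ne n 0 with rfl | h0
    · norm_num
      field_simp
    · rcases eq_or_ne n 1 with rfl | h1
      · norm_num
        field_simp
        linear_combination -hs2
      · split_ifs <;> (try (exfalso; first | omega | tauto)) <;> field_simp <;> ring
  | cons b t =>
    simp only [parentVal, List.length_cons]
    rcases eq_or_ne (t.length + 1) n with h | h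
    · subst h
      split_ifs <;> (try (exfalso; first | omega | tauto)) <;> push_cast <;> field_simp <;> ring
    · rcases eq_or_ne n 0 with rfl | hm0
      · split_ifs <;> (try (exfalso; first | omega | tauto)) <;> field_simp <;>
          ring_nf <;> simp [hs0]
      · obtain ⟨k, rfl⟩ : ∃ k, n = k + 1 := ⟨n - 1, by omega⟩
        split_ifs <;> (try (exfalso; first | omega | tauto)) <;>
          simp only [Nat.add_sub_cancel, pow_succ] <;> field_simp <;>
          (try ring) <;> (try linear_combination (-(Real.sqrt 2:ℂ)^k) * hs2) <;> (try linear_combination -hs2)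

lemma inner_eN (n m : ℕ) : (inner ℂ (eN n) (eN m) : ℂ) = if n = m then 1 else 0 := by
  rw [eN, lp.inner_single_left]
  simp [RCLike.inner_apply, eN_apply]

lemma inner_eT (x y : List Bool) : (inner ℂ (eT x) (eT y) : ℂ) = if x = y then 1 else 0 := by
  rw [eT, lp.inner_single_left]
  simp only [RCLike.inner_apply, map_one, one_mul, mul_one, eT_apply]

lemma Winner (W : l2N →L[ℂ] l2T)
    (hW : ∀ n : ℕ, W (eN n) = ((Real.sqrt 2 : ℂ))⁻¹ ^ n • ∑ x ∈ sphereF n, eT x)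
    (n m : ℕ) : (inner ℂ (W (eN n)) (W (eN m)) : ℂ) = if n = m then 1 else 0 := by
  rw [hW, hW, inner_smul_left, inner_smul_right, sum_inner]
  have hsum : (∑ x ∈ sphereF n, inner ℂ (eT x) (∑ y ∈ sphereF m, eT y) : ℂ)
      = if n = m then (2:ℂ) ^ n else 0 := by
    have h1 : ∀ x ∈ sphereF n, (inner ℂ (eT x) (∑ y ∈ sphereF m, eT y) : ℂ)
        = if x ∈ sphereF m then 1 else 0 := by
      intro x _
      rw [inner_sum]
      rw [Finset.sum_congr rfl fun y _ => inner_eT x y]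
      exact Finset.sum_ite_eq (sphereF m) x (fun _ => 1)
    rw [Finset.sum_congr rfl h1]
    rcases eq_or_ne n m with rfl | hnm
    · rw [if_pos rfl, Finset.sum_congr rfl (fun x hx => if_pos hx), Finset.sum_const,
        card_sphereF, nsmul_eq_mul]
      push_cast; ring
    · rw [if_neg hnm]
      apply Finset.sum_eq_zero
      intro x hx
      rw [if_neg]
      intro hxm
      exact hnm ((mem_sphereF.mp hx).symm.trans (mem_sphereF.mp hxm))
  rw [hsum]
  rcases eq_or_ne n m with rfl | hnm
  · rw [if_pos rfl, if_pos rfl]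
    have hc : (starRingEnd ℂ) (((Real.sqrt 2 : ℂ))⁻¹ ^ n) = ((Real.sqrt 2 : ℂ))⁻¹ ^ n := by
      rw [map_pow, map_inv₀, Complex.conj_ofReal]
    rw [hc]
    have hs2 : (Real.sqrt 2 : ℂ) * (Real.sqrt 2 : ℂ) = 2 := by
      rw [← Complex.ofReal_mul, Real.mul_self_sqrt (by norm_num : (0:ℝ) ≤ 2)]
      norm_num
    have hs0 : (Real.sqrt 2 : ℂ) ≠ 0 := by
      simpa using Real.sqrt_ne_zero'.mpr (by norm_num : (0:ℝ) < 2)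
    rw [← mul_assoc, ← mul_pow, ← mul_pow]
    rw [show ((Real.sqrt 2 : ℂ))⁻¹ * ((Real.sqrt 2 : ℂ))⁻¹ * 2 = 1 by
      rw [← mul_inv, hs2]; norm_num]
    simp
  · rw [if_neg hnm, if_neg hnm, mul_zero, mul_zero]

lemma WstarW (W : l2N →L[ℂ] l2T)
    (hW : ∀ n : ℕ, W (eN n) = ((Real.sqrt 2 : ℂ))⁻¹ ^ n • ∑ x ∈ sphereF n, eT x) :
    adjoint W ∘L W = ContinuousLinearMap.id ℂ l2N := by
  apply ext_eN
  intro n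
  have h : innerSL ℂ ((adjoint W ∘L W) (eN n)) = innerSL ℂ (eN n) := by
    apply ext_eN
    intro m
    simp only [innerSL_apply_apply, ContinuousLinearMap.comp_apply, adjoint_inner_left]
    rw [Winner W hW, inner_eN]
  have h' : ∀ v : l2N, (inner ℂ ((adjoint W ∘L W) (eN n)) v : ℂ) = inner ℂ (eN n) v := by
    intro v
    have := DFunLike.congr_fun h v
    simpa using this
  simpa using ext_inner_right ℂ h'

theorem stmt17 (v : ℕ → ℝ) (M : ℝ) (hv : ∀ n, |v n| ≤ M)
    (HV : l2T →L[ℂ] l2T) (hHV : IsSchrodingerOp (fun x => v x.length) HV)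
    (W : l2N →L[ℂ] l2T)
    (hW : ∀ n : ℕ, W (eN n) = ((Real.sqrt 2 : ℂ))⁻¹ ^ n • ∑ x ∈ sphereF n, eT x)
    (J : l2N →L[ℂ] l2N)
    (hJ : ∀ f : l2N, ∀ n : ℕ,
      (J f : ∀ _ : ℕ, ℂ) n =
        (if n = 0 then 0 else f (n - 1)) + ((v n / Real.sqrt 2 : ℝ) : ℂ) * f n + f (n + 1)) :
    J = ((Real.sqrt 2 : ℂ))⁻¹ • (adjoint W ∘L HV ∘L W) ∧
    (∀ f : l2N, ∃ g : l2N, HV (W f) = W g) ∧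
    ∀ f : l2N, HV (W f) = (Real.sqrt 2 : ℂ) • W (J f) := by
  have hs0 : (Real.sqrt 2 : ℂ) ≠ 0 := by
    simpa using Real.sqrt_ne_zero'.mpr (by norm_num : (0:ℝ) < 2)
  have h3op : HV ∘L W = (Real.sqrt 2 : ℂ) • (W ∘L J) := by
    apply ext_eN
    intro n
    simp only [ContinuousLinearMap.comp_apply, ContinuousLinearMap.smul_apply]
    exact key v HV hHV W hW J hJ n
  have h3 : ∀ f : l2N, HV (W f) = (Real.sqrt 2 : ℂ) • W (J f) := by
    intro f
    have := DFunLike.congr_fun h3op f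
    rw [ContinuousLinearMap.smul_apply, ContinuousLinearMap.comp_apply] at this; exact this
  refine ⟨?_, fun f => ⟨(Real.sqrt 2 : ℂ) • J f, by rw [h3, W.map_smul]⟩, h3⟩
  ext f
  simp only [ContinuousLinearMap.smul_apply, ContinuousLinearMap.comp_apply]
  rw [h3, (adjoint W).map_smul]
  have hWW := DFunLike.congr_fun (WstarW W hW) (J f)
  simp only [ContinuousLinearMap.comp_apply, ContinuousLinearMap.id_apply] at hWW
  rw [hWW, smul_smul, inv_mul_cancel₀ hs0, one_smul]
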